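/- Let g ≥ 1 be an integer and ε = exp(iπ/g) ∈ ℂ a primitive (2g)-th root of unity. Define the Laurent polynomial P(u) = (1/2)(u^{g-1} + u^{1-g}) · ∏_{k=1}^{g-1} (ε^k u − ε^{−k} u^{−1})/(ε^k − ε^{−k}). Then for every integer l, P(ε^l) = 1 if g divides l, and P(ε^l) = 0 otherwise. -/

import Mathlib

open Finset

/-- `ε = exp(iπ/g)`, a primitive `(2g)`-th root of unity. -/
noncomputable def eps (g : ℕ) : ℂ := Complex.exp (Real.pi * Complex.I / g)

/-- The symmetrized Lagrange-type Laurent polynomial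
`P(u) = (1/2)(u^{g-1} + u^{1-g}) · ∏_{k=1}^{g-1} (ε^k u − ε^{−k} u^{−1})/(ε^k − ε^{−k})`. -/
noncomputable def interpP (g : ℕ) (u : ℂ) : ℂ :=
  (1 / 2) * (u ^ ((g : ℤ) - 1) + u ^ (1 - (g : ℤ))) *
    ∏ k ∈ Finset.Icc 1 (g - 1),
      (eps g ^ (k : ℤ) * u - eps g ^ (-(k : ℤ)) * u⁻¹) /
        (eps g ^ (k : ℤ) - eps g ^ (-(k : ℤ)))

lemma eps_ne_zero (g : ℕ) : eps g ≠ 0 := Complex.exp_ne_zero _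

lemma eps_zpow (g : ℕ) (n : ℤ) :
    eps g ^ n = Complex.exp (n * (Real.pi * Complex.I / g)) := by
  rw [eps, ← Complex.exp_int_mul]

lemma eps_pow_g (g : ℕ) (hg : 1 ≤ g) : eps g ^ (g : ℤ) = -1 := by
  rw [eps_zpow]
  have hg0 : (g : ℂ) ≠ 0 := Nat.cast_ne_zero.2 (by omega)
  have h : ((g : ℤ) : ℂ) * (Real.pi * Complex.I / g) = Real.pi * Complex.I := by
    push_cast
    field_simp
  rw [h, Complex.exp_pi_mul_I]

lemma eps_zpow_g_mul (g : ℕ) (hg : 1 ≤ g) (c : ℤ) :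
    eps g ^ ((g : ℤ) * c) = (-1 : ℂ) ^ c := by
  rw [zpow_mul, eps_pow_g g hg]

lemma neg_one_zpow_mul_self (c : ℤ) : ((-1 : ℂ) ^ c) * ((-1 : ℂ) ^ c) = 1 := by
  rw [← zpow_add₀ (by norm_num : (-1:ℂ) ≠ 0), ← two_mul, zpow_mul]
  norm_num

lemma neg_one_zpow_inv (c : ℤ) : ((-1 : ℂ) ^ c)⁻¹ = (-1 : ℂ) ^ c :=
  inv_eq_of_mul_eq_one_right (neg_one_zpow_mul_self c)

lemma denom_ne (g : ℕ) (hg : 1 ≤ g) (k : ℕ) (hk : k ∈ Finset.Icc 1 (g - 1)) :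
    eps g ^ (k : ℤ) - eps g ^ (-(k : ℤ)) ≠ 0 := by
  simp only [Finset.mem_Icc] at hk
  intro h
  have heq : eps g ^ (k : ℤ) = eps g ^ (-(k : ℤ)) := sub_eq_zero.1 h
  have h2 : eps g ^ (2 * (k : ℤ)) = 1 := by
    calc eps g ^ (2 * (k : ℤ)) = eps g ^ (k : ℤ) * eps g ^ (k : ℤ) := by
          rw [← zpow_add₀ (eps_ne_zero g), two_mul]
      _ = 1 := by nth_rewrite 1 [heq]; rw [← zpow_add₀ (eps_ne_zero g)]; simp
  rw [eps_zpow, Complex.exp_eq_one_iff] at h2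
  obtain ⟨n, hn⟩ := h2
  have hgc : (g : ℂ) ≠ 0 := Nat.cast_ne_zero.2 (by omega)
  have hπ : (Real.pi : ℂ) ≠ 0 := by exact_mod_cast Real.pi_ne_zero
  have hI : Complex.I ≠ 0 := Complex.I_ne_zero
  field_simp at hn
  have hk' : ((k : ℤ) : ℂ) = ((n * g : ℤ) : ℂ) := by
    push_cast
    have h1 : (k : ℂ) * (Real.pi * Complex.I) = (n : ℂ) * (g : ℂ) * (Real.pi * Complex.I) := by
      push_cast at hn
      linear_combination (Real.pi * Complex.I / 2) * hn
    exact mul_right_cancel₀ (mul_ne_zero hπ hI) h1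
  have hkz : (k : ℤ) = n * g := by exact_mod_cast hk'
  have hn1 : 1 ≤ n := by nlinarith [hkz, hk.1, hk.2, hg]
  have : (g : ℤ) ≤ k := by nlinarith
  omega

/-- For every integer `l`, `P(ε^l) = 1` if `g ∣ l` and `P(ε^l) = 0` otherwise. -/
theorem interpP_eval_eps_pow (g : ℕ) (hg : 1 ≤ g) (l : ℤ) :
    ((g : ℤ) ∣ l → interpP g (eps g ^ l) = 1) ∧
      (¬ (g : ℤ) ∣ l → interpP g (eps g ^ l) = 0) := by
  constructor
  · rintro ⟨m, rfl⟩
    set s : ℂ := (-1 : ℂ) ^ m with hs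
    have hss : s * s = 1 := neg_one_zpow_mul_self m
    have hsi : s⁻¹ = s := neg_one_zpow_inv m
    have hul : eps g ^ ((g : ℤ) * m) = s := eps_zpow_g_mul g hg m
    rw [hul, interpP]
    have hprod : ∏ k ∈ Finset.Icc 1 (g - 1),
        (eps g ^ (k : ℤ) * s - eps g ^ (-(k : ℤ)) * s⁻¹) /
          (eps g ^ (k : ℤ) - eps g ^ (-(k : ℤ))) = s ^ (g - 1) := by
      rw [Finset.prod_congr rfl (fun k hk => ?_), Finset.prod_const, Nat.card_Icc]
      · rfl
      · rw [hsi, div_eq_iff (denom_ne g hg k hk)]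
        ring
    rw [hprod]
    have hg1 : (g : ℤ) - 1 = ((g - 1 : ℕ) : ℤ) := by omega
    have hg2 : 1 - (g : ℤ) = -((g - 1 : ℕ) : ℤ) := by omega
    have ht : s ^ (g - 1) * s ^ (g - 1) = 1 := by
      rw [← mul_pow, hss, one_pow]
    have hti : (s ^ (g - 1))⁻¹ = s ^ (g - 1) := inv_eq_of_mul_eq_one_right ht
    rw [hg1, hg2, zpow_natCast, zpow_neg, zpow_natCast, hti]
    linear_combination ht
  · intro hndvd
    have hg0 : (0 : ℤ) < g := by exact_mod_cast hg
    have hr0 : 0 ≤ l % g := Int.emod_nonneg l (by omega)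
    have hrg : l % g < g := Int.emod_lt_of_pos l hg0
    have hrne : l % g ≠ 0 := fun h => hndvd (Int.dvd_of_emod_eq_zero h)
    set k : ℕ := ((g : ℤ) - l % g).toNat with hk
    have hkmem : k ∈ Finset.Icc 1 (g - 1) := by
      simp only [Finset.mem_Icc]
      omega
    have hdvd : (g : ℤ) ∣ ((k : ℤ) + l) := by
      have hkval : (k : ℤ) = (g : ℤ) - l % g := by omega
      refine ⟨1 + l / g, ?_⟩
      rw [hkval]
      linear_combination -Int.mul_ediv_add_emod l g
    rw [interpP]
    apply mul_eq_zero_of_right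
    apply Finset.prod_eq_zero hkmem
    obtain ⟨c, hc⟩ := hdvd
    have hnum : eps g ^ (k : ℤ) * eps g ^ l - eps g ^ (-(k : ℤ)) * (eps g ^ l)⁻¹ = 0 := by
      rw [← zpow_neg, ← zpow_add₀ (eps_ne_zero g), ← zpow_add₀ (eps_ne_zero g)]
      have h2 : -(k : ℤ) + -l = (g : ℤ) * (-c) := by rw [mul_neg, ← hc]; ring
      rw [hc, h2, eps_zpow_g_mul g hg, eps_zpow_g_mul g hg, zpow_neg, neg_one_zpow_inv, sub_self]
    rw [hnum, zero_div]
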